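/- arXiv:2308.05284 — 3 statements merged into one kernel-verified Lean document; each statement's English description precedes it below -/
import Mathlib

section
/- Let f : ℂⁿ → ℂ^{2n} be a polynomial map with f(0)=0 such that 0 < dim_ℂ(D/I_Δ) < ∞ (which holds when f is A-finite but not stable). Then the radical of I_Δ equals the diagonal ideal D, and there exists an ideal Q of R = ℂ⟦x₁,…,xₙ,x₁',…,xₙ'⟧, primary with radical equal to the maximal ideal of R, such that I_Δ = D ∩ Q. -/
/- STATEMENT 2: If `f : ℂⁿ → ℂ^{2n}` is polynomial with `f 0 = 0` and
`0 < dim_ℂ (D / I_Δ) < ∞`, then `√(I_Δ) = D` and `I_Δ = D ∩ Q` for some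
ideal `Q` primary with radical the maximal ideal `⟨x₁,…,xₙ,x₁',…,xₙ'⟩`
of `R = ℂ⟦x,x'⟧`. -/

set_option synthInstance.maxHeartbeats 1000000

noncomputable section

open MvPowerSeries

/-- The local ring `R = ℂ⟦x₁,…,xₙ,x₁',…,xₙ'⟧`. -/
abbrev DPRing (n : ℕ) : Type := MvPowerSeries (Fin n ⊕ Fin n) ℂ

/-- The diagonal ideal `D = ⟨x₁ - x₁', …, xₙ - xₙ'⟩`. -/
def diagIdeal (n : ℕ) : Ideal (DPRing n) :=
  Ideal.span (Set.range fun j : Fin n =>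
    (X (Sum.inl j) - X (Sum.inr j) : DPRing n))

/-- The maximal ideal of `R`, generated by all `2n` variables. -/
def maxIdeal (n : ℕ) : Ideal (DPRing n) :=
  Ideal.span (Set.range fun s : Fin n ⊕ Fin n => (X s : DPRing n))

/-- `f_i(x) - f_i(x')` as an element of `R = ℂ⟦x,x'⟧`. -/
def doublePointGen (n : ℕ) (F : Fin (2 * n) → MvPolynomial (Fin n) ℂ)
    (i : Fin (2 * n)) : DPRing n :=
  MvPolynomial.aeval (fun j : Fin n => (X (Sum.inl j) : DPRing n)) (F i) -
    MvPolynomial.aeval (fun j : Fin n => (X (Sum.inr j) : DPRing n)) (F i)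

/-- The ideal `I_Δ = ⟨f₁(x) - f₁(x'), …, f_{2n}(x) - f_{2n}(x')⟩`. -/
def IDelta (n : ℕ) (F : Fin (2 * n) → MvPolynomial (Fin n) ℂ) : Ideal (DPRing n) :=
  Ideal.span (Set.range (doublePointGen n F))

namespace DP
variable {n : ℕ}


abbrev E (n : ℕ) := (Fin n ⊕ Fin n) →₀ ℕ

def edeg (e : E n) : ℕ := ∑ s, e s

lemma coeff_apply (f : DPRing n) (e : E n) : coeff e f = f e := rfl

lemma edeg_add (a b : E n) : edeg (a + b) = edeg a + edeg b := by
  simp [edeg, Finsupp.add_apply, Finset.sum_add_distrib]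

lemma edeg_single (s : Fin n ⊕ Fin n) : edeg (Finsupp.single s 1) = 1 := by
  simp [edeg, Finsupp.single_apply]

lemma edeg_eq_zero {e : E n} (h : edeg e = 0) : e = 0 := by
  ext s
  have := Finset.sum_eq_zero_iff.mp h s (Finset.mem_univ s)
  simpa using this

lemma sub_single_add {e : E n} {s : Fin n ⊕ Fin n} (h : 1 ≤ e s) :
    e - Finsupp.single s 1 + Finsupp.single s 1 = e := by
  ext t
  by_cases ht : s = t
  · subst ht
    simp [Finsupp.single_apply, Nat.sub_add_cancel h]
  · simp [Finsupp.single_apply, ht]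

lemma coeff_X_mul (s : Fin n ⊕ Fin n) (g : DPRing n) (e : E n) :
    coeff e (X s * g) =
      if 1 ≤ e s then g (e - Finsupp.single s 1) else 0 := by
  rw [X, coeff_monomial_mul]
  simp [Finsupp.single_le_iff, coeff_apply]

def gweight (f : DPRing n) (s : Fin n ⊕ Fin n) : DPRing n :=
  fun d => ((d s + 1 : ℂ) / ((edeg d : ℂ) + 1)) • f (d + Finsupp.single s 1)

lemma gweight_apply (f : DPRing n) (s : Fin n ⊕ Fin n) (d : E n) :
    gweight f s d = ((d s + 1 : ℂ) / ((edeg d : ℂ) + 1)) • f (d + Finsupp.single s 1) := rfl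

lemma decomp (k : ℕ) (f : DPRing n) (hf : ∀ e : E n, edeg e < k + 1 → f e = 0) :
    ∃ g : (Fin n ⊕ Fin n) → DPRing n,
      (∀ s d, edeg (d : E n) < k → (g s) d = 0) ∧ f = ∑ s, X s * g s := by
  refine ⟨gweight f, ?_, ?_⟩
  · intro s d hd
    have h0 : f (d + Finsupp.single s 1) = 0 := by
      apply hf
      rw [edeg_add, edeg_single]
      omega
    rw [gweight_apply, h0, smul_zero]
  · ext e
    rw [map_sum, coeff_apply]
    by_cases he : e = 0
    · subst he
      rw [hf 0 (by simp [edeg])]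
      refine (Finset.sum_eq_zero ?_).symm
      intro s _
      rw [coeff_X_mul]
      simp
    · have hd0 : edeg e ≠ 0 := fun h => he (edeg_eq_zero h)
      have hdC : ((edeg e : ℂ)) ≠ 0 := Nat.cast_ne_zero.mpr hd0
      have key : ∀ s, coeff e (X s * gweight f s)
          = ((e s : ℂ) / (edeg e : ℂ)) * f e := by
        intro s
        rw [coeff_X_mul]
        by_cases hs : 1 ≤ e s
        · rw [if_pos hs, gweight_apply]
          have h1 : (e - Finsupp.single s 1) + Finsupp.single s 1 = e := sub_single_add hs
          have h2 : (((e - Finsupp.single s 1 : E n) s : ℂ) + 1) = (e s : ℂ) := by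
            have : (e - Finsupp.single s 1 : E n) s + 1 = e s := by
              have := congrArg (fun d : E n => d s) h1
              simpa [Finsupp.single_apply] using this
            exact_mod_cast congrArg (Nat.cast : ℕ → ℂ) this
          have h3 : ((edeg (e - Finsupp.single s 1) : ℂ) + 1) = (edeg e : ℂ) := by
            have : edeg (e - Finsupp.single s 1) + 1 = edeg e := by
              conv_rhs => rw [← h1]
              rw [edeg_add, edeg_single]
            exact_mod_cast congrArg (Nat.cast : ℕ → ℂ) this
          rw [smul_eq_mul, h2, h3, h1]
        · rw [if_neg hs]
          have h0 : e s = 0 := by omega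
          rw [h0]
          simp
      rw [Finset.sum_congr rfl fun s _ => key s, ← Finset.sum_mul, ← Finset.sum_div]
      rw [show (∑ s, (e s : ℂ)) = (edeg e : ℂ) by rw [edeg]; push_cast; ring]
      rw [div_self hdC, one_mul]

lemma X_mem_maxIdeal (s : Fin n ⊕ Fin n) : (X s : DPRing n) ∈ maxIdeal n :=
  Ideal.subset_span ⟨s, rfl⟩

lemma low_vanish_mem_pow (k : ℕ) (f : DPRing n)
    (hf : ∀ e : E n, edeg e < k → f e = 0) : f ∈ maxIdeal n ^ k := by
  induction k generalizing f with
  | zero => simp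
  | succ k ih =>
    obtain ⟨g, hg, hfg⟩ := decomp k f hf
    rw [hfg]
    refine Ideal.sum_mem _ fun s _ => ?_
    rw [pow_succ']
    exact Ideal.mul_mem_mul (X_mem_maxIdeal s) (ih (g s) (hg s))

lemma maxIdeal_le_ker : maxIdeal n ≤ RingHom.ker (constantCoeff : DPRing n →+* ℂ) := by
  rw [maxIdeal, Ideal.span_le]
  rintro _ ⟨s, rfl⟩
  simp [RingHom.mem_ker]

lemma pow_le_low_vanish (k : ℕ) (f : DPRing n) (hfm : f ∈ maxIdeal n ^ k) :
    ∀ e : E n, edeg e < k → f e = 0 := by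
  induction k generalizing f with
  | zero => intro e he; omega
  | succ k ih =>
    rw [pow_succ] at hfm
    refine Submodule.mul_induction_on hfm ?_ ?_
    · intro a ha b hb e he
      suffices h : coeff e (a * b) = 0 from h
      rw [coeff_mul]
      refine Finset.sum_eq_zero fun p hp => ?_
      rw [Finset.HasAntidiagonal.mem_antidiagonal] at hp
      have hdeg : edeg p.1 + edeg p.2 = edeg e := by rw [← edeg_add, hp]
      by_cases h1 : edeg p.1 < k
      · rw [coeff_apply, ih a ha p.1 h1, zero_mul]
      · have h2 : p.2 = 0 := edeg_eq_zero (by omega)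
        have h3 : coeff (0 : E n) b = 0 := maxIdeal_le_ker hb
        rw [h2, h3, mul_zero]
    · intro x y hx hy e he
      change x e + y e = 0
      rw [hx e he, hy e he, add_zero]

lemma maxIdeal_eq_ker : maxIdeal n = RingHom.ker (constantCoeff : DPRing n →+* ℂ) := by
  refine le_antisymm maxIdeal_le_ker fun f hf => ?_
  have : f ∈ maxIdeal n ^ 1 := by
    apply low_vanish_mem_pow
    intro e he
    have : e = 0 := edeg_eq_zero (by omega)
    rw [this]
    exact hf
  simpa using this

lemma maxIdeal_isMaximal : (maxIdeal n).IsMaximal := by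
  rw [maxIdeal_eq_ker]
  exact RingHom.ker_isMaximal_of_surjective _ fun c => ⟨C c, constantCoeff_C _⟩


lemma coeff_mul_X (s : Fin n ⊕ Fin n) (g : DPRing n) (e : E n) :
    coeff e (g * X s) =
      if 1 ≤ e s then g (e - Finsupp.single s 1) else 0 := by
  rw [X, coeff_mul_monomial]
  simp [Finsupp.single_le_iff, coeff_apply]

/-- update the two exponents at the `j`-th variable pair -/
def upd (e : E n) (j : Fin n) (a b : ℕ) : E n :=
  Finsupp.update (Finsupp.update e (Sum.inl j) a) (Sum.inr j) b

lemma upd_apply (e : E n) (j : Fin n) (a b : ℕ) (s : Fin n ⊕ Fin n) :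
    upd e j a b s = if s = Sum.inr j then b else if s = Sum.inl j then a else e s := by
  simp only [upd, Finsupp.coe_update, Function.update_apply]

lemma upd_inl (e : E n) (j : Fin n) (a b : ℕ) : upd e j a b (Sum.inl j) = a := by
  simp [upd_apply]

lemma upd_inr (e : E n) (j : Fin n) (a b : ℕ) : upd e j a b (Sum.inr j) = b := by
  simp [upd_apply]

lemma upd_ne (e : E n) (j : Fin n) (a b : ℕ) {s : Fin n ⊕ Fin n}
    (h1 : s ≠ Sum.inl j) (h2 : s ≠ Sum.inr j) : upd e j a b s = e s := by
  simp [upd_apply, h1, h2]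

lemma upd_upd (e : E n) (j : Fin n) (a b a' b' : ℕ) :
    upd (upd e j a b) j a' b' = upd e j a' b' := by
  ext s
  rcases eq_or_ne s (Sum.inr j) with rfl | h1
  · rw [upd_inr, upd_inr]
  rcases eq_or_ne s (Sum.inl j) with rfl | h2
  · rw [upd_inl, upd_inl]
  · rw [upd_ne _ _ _ _ h2 h1, upd_ne _ _ _ _ h2 h1, upd_ne _ _ _ _ h2 h1]

lemma upd_self (e : E n) (j : Fin n) :
    upd e j (e (Sum.inl j)) (e (Sum.inr j)) = e := by
  ext s
  rcases eq_or_ne s (Sum.inr j) with rfl | h1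
  · rw [upd_inr]
  rcases eq_or_ne s (Sum.inl j) with rfl | h2
  · rw [upd_inl]
  · rw [upd_ne _ _ _ _ h2 h1]

lemma sub_single_inl (e : E n) (j : Fin n) :
    e - Finsupp.single (Sum.inl j) 1 =
      upd e j (e (Sum.inl j) - 1) (e (Sum.inr j)) := by
  ext s
  rw [Finsupp.tsub_apply]
  rcases eq_or_ne s (Sum.inr j) with rfl | h1
  · rw [upd_inr, Finsupp.single_apply, if_neg (by simp)]
    omega
  rcases eq_or_ne s (Sum.inl j) with rfl | h2
  · rw [upd_inl, Finsupp.single_apply, if_pos rfl]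
  · rw [upd_ne _ _ _ _ h2 h1, Finsupp.single_apply,
      if_neg (fun h => h2 h.symm)]
    omega

lemma sub_single_inr (e : E n) (j : Fin n) :
    e - Finsupp.single (Sum.inr j) 1 =
      upd e j (e (Sum.inl j)) (e (Sum.inr j) - 1) := by
  ext s
  rw [Finsupp.tsub_apply]
  rcases eq_or_ne s (Sum.inr j) with rfl | h1
  · rw [upd_inr, Finsupp.single_apply, if_pos rfl]
  rcases eq_or_ne s (Sum.inl j) with rfl | h2
  · rw [upd_inl, Finsupp.single_apply, if_neg (by simp)]
    omega
  · rw [upd_ne _ _ _ _ h2 h1, Finsupp.single_apply,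
      if_neg (fun h => h1 h.symm)]
    omega

lemma upd_sub_single (e : E n) (j : Fin n) (a b : ℕ) {s : Fin n ⊕ Fin n}
    (h1 : s ≠ Sum.inl j) (h2 : s ≠ Sum.inr j) :
    upd e j a b - Finsupp.single s 1 = upd (e - Finsupp.single s 1) j a b := by
  ext t
  rw [Finsupp.tsub_apply]
  rcases eq_or_ne t (Sum.inr j) with rfl | k1
  · rw [upd_inr, upd_inr, Finsupp.single_apply, if_neg h2]
    omega
  rcases eq_or_ne t (Sum.inl j) with rfl | k2
  · rw [upd_inl, upd_inl, Finsupp.single_apply, if_neg h1]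
    omega
  · rw [upd_ne _ _ _ _ k2 k1, upd_ne _ _ _ _ k2 k1, Finsupp.tsub_apply]

/-- collapse the `j`-th variable pair: substitute `x_j := x_j'`. -/
def rhoj (j : Fin n) (f : DPRing n) : DPRing n := fun e =>
  if e (Sum.inl j) = 0 then
    ∑ a ∈ Finset.range (e (Sum.inr j) + 1), f (upd e j a (e (Sum.inr j) - a))
  else 0

lemma rhoj_apply (j : Fin n) (f : DPRing n) (e : E n) :
    rhoj j f e = if e (Sum.inl j) = 0 then
      ∑ a ∈ Finset.range (e (Sum.inr j) + 1), f (upd e j a (e (Sum.inr j) - a))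
    else 0 := rfl

lemma rhoj_add (j : Fin n) (f g : DPRing n) :
    rhoj j (f + g) = rhoj j f + rhoj j g := by
  ext e
  rw [coeff_apply]
  show rhoj j (f + g) e = rhoj j f e + rhoj j g e
  rw [rhoj_apply, rhoj_apply, rhoj_apply]
  split
  · rw [← Finset.sum_add_distrib]
    exact Finset.sum_congr rfl fun a _ => rfl
  · rw [add_zero]

lemma rhoj_zero (j : Fin n) : rhoj j (0 : DPRing n) = 0 := by
  ext e
  rw [coeff_apply]
  show rhoj j 0 e = (0 : DPRing n) e
  rw [rhoj_apply]
  have hz : ∀ d : E n, (0 : DPRing n) d = 0 := fun _ => rfl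
  split
  · exact Finset.sum_eq_zero fun a _ => hz _
  · exact (hz e).symm

def rhojHom (j : Fin n) : DPRing n →+ DPRing n where
  toFun := rhoj j
  map_zero' := rhoj_zero j
  map_add' := rhoj_add j

def appHom : List (Fin n) → (DPRing n →+ DPRing n)
  | [] => AddMonoidHom.id _
  | j :: t => (appHom t).comp (rhojHom j)

/-- the quotient in the division identity for one variable pair -/
def hdiv (j : Fin n) (g : DPRing n) : DPRing n := fun d =>
  ∑ t ∈ Finset.range (d (Sum.inr j) + 1),
    g (upd d j (d (Sum.inl j) + 1 + t) (d (Sum.inr j) - t))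

lemma hdiv_apply (j : Fin n) (g : DPRing n) (d : E n) :
    hdiv j g d = ∑ t ∈ Finset.range (d (Sum.inr j) + 1),
      g (upd d j (d (Sum.inl j) + 1 + t) (d (Sum.inr j) - t)) := rfl

lemma hdiv_spec (j : Fin n) (g : DPRing n) :
    (X (Sum.inl j) - X (Sum.inr j)) * hdiv j g = g - rhoj j g := by
  ext e
  rw [sub_mul, map_sub, coeff_X_mul, coeff_X_mul, map_sub, coeff_apply, coeff_apply]
  have h1 : 1 ≤ e (Sum.inl j) → hdiv j g (e - Finsupp.single (Sum.inl j) 1) =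
      (∑ t ∈ Finset.range (e (Sum.inr j)),
        g (upd e j (e (Sum.inl j) + 1 + t) (e (Sum.inr j) - 1 - t))) + g e := by
    intro hpp
    rw [sub_single_inl, hdiv_apply, upd_inl, upd_inr, Finset.sum_range_succ']
    congr 1
    · refine Finset.sum_congr rfl fun t _ => ?_
      rw [upd_upd]
      congr 2 <;> omega
    · rw [upd_upd, show e (Sum.inl j) - 1 + 1 + 0 = e (Sum.inl j) by omega,
        show e (Sum.inr j) - 0 = e (Sum.inr j) from rfl, upd_self]
  have h2 : 1 ≤ e (Sum.inr j) → hdiv j g (e - Finsupp.single (Sum.inr j) 1) =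
      ∑ t ∈ Finset.range (e (Sum.inr j)),
        g (upd e j (e (Sum.inl j) + 1 + t) (e (Sum.inr j) - 1 - t)) := by
    intro hqq
    rw [sub_single_inr, hdiv_apply, upd_inl, upd_inr,
      show e (Sum.inr j) - 1 + 1 = e (Sum.inr j) by omega]
    refine Finset.sum_congr rfl fun t _ => ?_
    rw [upd_upd]
  by_cases hpp : 1 ≤ e (Sum.inl j)
  · rw [if_pos hpp, h1 hpp, rhoj_apply, if_neg (by omega : ¬ e (Sum.inl j) = 0),
      sub_zero]
    by_cases hqq : 1 ≤ e (Sum.inr j)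
    · rw [if_pos hqq, h2 hqq]; ring
    · rw [if_neg hqq, show e (Sum.inr j) = 0 by omega, Finset.range_zero,
        Finset.sum_empty, zero_add, sub_zero]
  · rw [if_neg hpp, rhoj_apply, if_pos (by omega : e (Sum.inl j) = 0),
      Finset.sum_range_succ']
    have e0 : upd e j 0 (e (Sum.inr j) - 0) = e := by
      rw [show e (Sum.inr j) - 0 = e (Sum.inr j) from rfl,
        show (0 : ℕ) = e (Sum.inl j) by omega, upd_self]
    rw [e0]
    by_cases hqq : 1 ≤ e (Sum.inr j)
    · rw [if_pos hqq, h2 hqq]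
      have hc : ∀ t ∈ Finset.range (e (Sum.inr j)),
          g (upd e j (t + 1) (e (Sum.inr j) - (t + 1)))
          = g (upd e j (e (Sum.inl j) + 1 + t) (e (Sum.inr j) - 1 - t)) := by
        intro t _
        congr 2 <;> omega
      rw [Finset.sum_congr rfl hc]
      ring
    · rw [if_neg hqq, show e (Sum.inr j) = 0 by omega, Finset.range_zero,
        Finset.sum_empty, zero_sub, zero_add]
      ring

lemma sub_rhoj_mem (j : Fin n) (g : DPRing n) : g - rhoj j g ∈ diagIdeal n := by
  rw [← hdiv_spec, mul_comm]
  exact Ideal.mul_mem_left _ _ (Ideal.subset_span ⟨j, rfl⟩)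

lemma rhoj_kill (j : Fin n) (r : DPRing n) :
    rhoj j (r * (X (Sum.inl j) - X (Sum.inr j))) = 0 := by
  set f := r * (X (Sum.inl j) - X (Sum.inr j)) with hf
  ext e
  rw [coeff_apply]
  show rhoj j f e = (0 : DPRing n) e
  have hz : (0 : DPRing n) e = 0 := rfl
  rw [rhoj_apply, hz]
  split
  case isFalse => rfl
  case isTrue hp =>
    have term : ∀ a, f (upd e j a (e (Sum.inr j) - a)) =
        (if 1 ≤ a then r (upd e j (a - 1) (e (Sum.inr j) - a)) else 0) -
        (if 1 ≤ e (Sum.inr j) - a then r (upd e j a (e (Sum.inr j) - a - 1)) else 0) := by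
      intro a
      rw [show f (upd e j a (e (Sum.inr j) - a)) =
        coeff (upd e j a (e (Sum.inr j) - a)) f from rfl, hf, mul_sub, map_sub,
        coeff_mul_X, coeff_mul_X, upd_inl, upd_inr]
      congr 1
      · split
        next h => rw [sub_single_inl, upd_inl, upd_inr, upd_upd]
        next => rfl
      · split
        next h => rw [sub_single_inr, upd_inl, upd_inr, upd_upd]
        next => rfl
    rw [Finset.sum_congr rfl fun a _ => term a, Finset.sum_sub_distrib]
    have hA : ∑ a ∈ Finset.range (e (Sum.inr j) + 1),
        (if 1 ≤ a then r (upd e j (a - 1) (e (Sum.inr j) - a)) else 0) =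
        ∑ a ∈ Finset.range (e (Sum.inr j)), r (upd e j a (e (Sum.inr j) - a - 1)) := by
      rw [Finset.sum_range_succ', if_neg (by omega), add_zero]
      refine Finset.sum_congr rfl fun a _ => ?_
      rw [if_pos (by omega)]
      congr 2 <;> omega
    have hB : ∑ a ∈ Finset.range (e (Sum.inr j) + 1),
        (if 1 ≤ e (Sum.inr j) - a then r (upd e j a (e (Sum.inr j) - a - 1)) else 0) =
        ∑ a ∈ Finset.range (e (Sum.inr j)), r (upd e j a (e (Sum.inr j) - a - 1)) := by
      rw [Finset.sum_range_succ, if_neg (by omega), add_zero]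
      refine Finset.sum_congr rfl fun a ha => ?_
      rw [Finset.mem_range] at ha
      rw [if_pos (by omega)]
    rw [hA, hB, sub_self]

lemma rhoj_commute (j : Fin n) {s : Fin n ⊕ Fin n} (h1 : s ≠ Sum.inl j)
    (h2 : s ≠ Sum.inr j) (r : DPRing n) :
    rhoj j (r * X s) = rhoj j r * X s := by
  set f := r * X s with hf
  ext e
  rw [coeff_mul_X]
  rw [coeff_apply]
  show rhoj j f e = _
  rw [rhoj_apply]
  have hes : ∀ a b, upd e j a b s = e s := fun a b => upd_ne e j a b h1 h2
  have hinl : (e - Finsupp.single s 1 : E n) (Sum.inl j) = e (Sum.inl j) := by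
    rw [Finsupp.tsub_apply, Finsupp.single_apply, if_neg h1]
    omega
  have hinr : (e - Finsupp.single s 1 : E n) (Sum.inr j) = e (Sum.inr j) := by
    rw [Finsupp.tsub_apply, Finsupp.single_apply, if_neg h2]
    omega
  have hterm : ∀ a, f (upd e j a (e (Sum.inr j) - a)) =
      if 1 ≤ e s then r (upd (e - Finsupp.single s 1) j a (e (Sum.inr j) - a)) else 0 := by
    intro a
    rw [show f (upd e j a (e (Sum.inr j) - a)) =
      coeff (upd e j a (e (Sum.inr j) - a)) f from rfl, hf, coeff_mul_X, hes]
    split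
    case isTrue h => rw [upd_sub_single e j _ _ h1 h2]
    case isFalse => rfl
  split
  case isTrue hp =>
    by_cases hs : 1 ≤ e s
    · rw [if_pos hs, rhoj_apply, hinl, hinr, if_pos hp]
      refine Finset.sum_congr rfl fun a _ => ?_
      rw [hterm a, if_pos hs]
    · rw [if_neg hs]
      refine Finset.sum_eq_zero fun a _ => ?_
      rw [hterm a, if_neg hs]
  case isFalse hp =>
    by_cases hs : 1 ≤ e s
    · rw [if_pos hs, rhoj_apply, hinl, if_neg hp]
    · rw [if_neg hs]

lemma appHom_apply_mem (l : List (Fin n)) (g : DPRing n) :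
    g - appHom l g ∈ diagIdeal n := by
  induction l generalizing g with
  | nil => simp [appHom, AddMonoidHom.id_apply]
  | cons j t ih =>
    have : appHom (j :: t) g = appHom t (rhoj j g) := rfl
    rw [this, show g - appHom t (rhoj j g) =
      (g - rhoj j g) + (rhoj j g - appHom t (rhoj j g)) by ring]
    exact Ideal.add_mem _ (sub_rhoj_mem j g) (ih (rhoj j g))

lemma appHom_kill (l : List (Fin n)) (r : DPRing n) {j : Fin n} (hj : j ∈ l) :
    appHom l (r * (X (Sum.inl j) - X (Sum.inr j))) = 0 := by
  induction l generalizing r with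
  | nil => simp at hj
  | cons k t ih =>
    have hc : appHom (k :: t) (r * (X (Sum.inl j) - X (Sum.inr j)))
        = appHom t (rhoj k (r * (X (Sum.inl j) - X (Sum.inr j)))) := rfl
    rcases eq_or_ne k j with rfl | hkj
    · rw [hc, rhoj_kill, map_zero]
    · have hcomm : rhoj k (r * (X (Sum.inl j) - X (Sum.inr j)))
          = rhoj k r * (X (Sum.inl j) - X (Sum.inr j)) := by
        rw [mul_sub, mul_sub]
        rw [show rhoj k (r * X (Sum.inl j) - r * X (Sum.inr j))
          = rhoj k (r * X (Sum.inl j)) - rhoj k (r * X (Sum.inr j)) from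
          map_sub (rhojHom k) _ _]
        rw [rhoj_commute k (by simp [hkj.symm]) (by simp) r,
          rhoj_commute k (by simp) (by simp [hkj.symm]) r]
      rw [hc, hcomm]
      rcases List.mem_cons.mp hj with h | h
      · exact absurd h.symm hkj
      · exact ih (rhoj k r) h

/-- `f` has no monomial involving the variable `s₀` -/
def CleanAt (s₀ : Fin n ⊕ Fin n) (f : DPRing n) : Prop :=
  ∀ e : E n, e s₀ ≠ 0 → f e = 0

lemma rhoj_cleanAt_self (j : Fin n) (f : DPRing n) :
    CleanAt (Sum.inl j) (rhoj j f) := by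
  intro e he
  rw [rhoj_apply, if_neg he]

lemma rhoj_cleanAt (j : Fin n) {j' : Fin n} (h : j' ≠ j) {f : DPRing n}
    (hf : CleanAt (Sum.inl j') f) : CleanAt (Sum.inl j') (rhoj j f) := by
  intro e he
  rw [rhoj_apply]
  split
  · refine Finset.sum_eq_zero fun a _ => hf _ ?_
    rw [upd_ne _ _ _ _ (by simp [h]) (by simp)]
    exact he
  · rfl

lemma appHom_cleanAt (l : List (Fin n)) {j : Fin n} {f : DPRing n}
    (hf : CleanAt (Sum.inl j) f) : CleanAt (Sum.inl j) (appHom l f) := by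
  induction l generalizing f with
  | nil => exact hf
  | cons k t ih =>
    show CleanAt _ (appHom t (rhoj k f))
    rcases eq_or_ne k j with rfl | hkj
    · exact ih (rhoj_cleanAt_self k f)
    · exact ih (rhoj_cleanAt k hkj.symm hf)

lemma appHom_cleanAt_mem (l : List (Fin n)) {j : Fin n} (hj : j ∈ l) (f : DPRing n) :
    CleanAt (Sum.inl j) (appHom l f) := by
  induction l generalizing f with
  | nil => simp at hj
  | cons k t ih =>
    show CleanAt _ (appHom t (rhoj k f))
    rcases eq_or_ne k j with rfl | hkj
    · exact appHom_cleanAt t (rhoj_cleanAt_self k f)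
    · refine ih ?_ (rhoj k f)
      rcases List.mem_cons.mp hj with h | h
      · exact absurd h.symm hkj
      · exact h

lemma rhoj_fixes (j : Fin n) {f : DPRing n} (hf : CleanAt (Sum.inl j) f) :
    rhoj j f = f := by
  ext e
  rw [coeff_apply]
  show rhoj j f e = f e
  rw [rhoj_apply]
  split
  case isTrue hp =>
    rw [Finset.sum_eq_single_of_mem 0 (Finset.mem_range.mpr (by omega))]
    · rw [show e (Sum.inr j) - 0 = e (Sum.inr j) from rfl, ← hp, upd_self]
    · intro a _ ha
      refine hf _ ?_
      rw [upd_inl]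
      exact ha
  case isFalse hp =>
    exact (hf e hp).symm

def CleanAll (f : DPRing n) : Prop := ∀ j : Fin n, CleanAt (Sum.inl j) f

lemma appHom_fixes (l : List (Fin n)) {f : DPRing n}
    (hf : ∀ j ∈ l, CleanAt (Sum.inl j) f) : appHom l f = f := by
  induction l generalizing f with
  | nil => rfl
  | cons k t ih =>
    show appHom t (rhoj k f) = f
    rw [rhoj_fixes k (hf k (List.mem_cons_self))]
    exact ih fun j hj => hf j (List.mem_cons_of_mem k hj)

/-- the total collapse map `x ↦ x'` -/
def rho : DPRing n →+ DPRing n := appHom (List.finRange n)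

lemma rho_cleanAll (f : DPRing n) : CleanAll (rho f) :=
  fun j => appHom_cleanAt_mem _ (List.mem_finRange j) f

lemma rho_fixes {f : DPRing n} (hf : CleanAll f) : rho f = f :=
  appHom_fixes _ fun j _ => hf j

lemma sub_rho_mem (f : DPRing n) : f - rho f ∈ diagIdeal n :=
  appHom_apply_mem _ f

lemma rho_diag (z : DPRing n) (hz : z ∈ diagIdeal n) : rho z = 0 := by
  rw [diagIdeal] at hz
  obtain ⟨c, hc⟩ := Ideal.mem_span_range_iff_exists_fun.mp hz
  rw [← hc, map_sum]
  refine Finset.sum_eq_zero fun j _ => ?_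
  exact appHom_kill _ (c j) (List.mem_finRange j)

lemma cleanAll_one : CleanAll (1 : DPRing n) := by
  intro j e he
  have : e ≠ 0 := by
    intro h
    rw [h] at he
    exact he rfl
  rw [show (1 : DPRing n) e = coeff e 1 from rfl]
  classical
  rw [coeff_one, if_neg this]

lemma cleanAll_mul {f g : DPRing n} (hf : CleanAll f) (hg : CleanAll g) :
    CleanAll (f * g) := by
  intro j e he
  rw [show (f * g) e = coeff e (f * g) from rfl]
  classical
  rw [coeff_mul]
  refine Finset.sum_eq_zero fun p hp => ?_
  rw [Finset.HasAntidiagonal.mem_antidiagonal] at hp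
  have : p.1 (Sum.inl j) ≠ 0 ∨ p.2 (Sum.inl j) ≠ 0 := by
    by_contra h
    push_neg at h
    have h2 : p.1 (Sum.inl j) + p.2 (Sum.inl j) = e (Sum.inl j) := by
      have := congrArg (fun d : E n => d (Sum.inl j)) hp
      simpa using this
    exact he (by omega)
  rcases this with h | h
  · rw [coeff_apply, hf j _ h, zero_mul]
  · rw [coeff_apply, coeff_apply, hg j _ h, mul_zero]

theorem diagIdeal_isPrime : (diagIdeal n).IsPrime := by
  constructor
  · intro h
    have h1 : (1 : DPRing n) ∈ diagIdeal n := by rw [h]; trivial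
    have := rho_diag 1 h1
    rw [rho_fixes cleanAll_one] at this
    exact one_ne_zero this
  · intro f g hfg
    have hvf := sub_rho_mem f
    have hvg := sub_rho_mem g
    have hprod : rho f * rho g ∈ diagIdeal n := by
      have : rho f * rho g - f * g =
          -(f * (g - rho g)) - ((f - rho f) * rho g) := by ring
      have hmem : rho f * rho g - f * g ∈ diagIdeal n := by
        rw [this]
        exact Ideal.sub_mem _
          (neg_mem (Ideal.mul_mem_left _ _ hvg))
          (Ideal.mul_mem_right _ _ hvf)
      have := Ideal.add_mem _ hmem hfg
      simpa using this
    have hzero : rho f * rho g = 0 := by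
      have hfix : rho (rho f * rho g) = rho f * rho g :=
        rho_fixes (cleanAll_mul (rho_cleanAll f) (rho_cleanAll g))
      rw [← hfix]
      exact rho_diag _ hprod
    rcases mul_eq_zero.mp hzero with h | h
    · left
      have := hvf
      rw [h, sub_zero] at this
      exact this
    · right
      have := hvg
      rw [h, sub_zero] at this
      exact this


lemma aeval_sub_mem (p : MvPolynomial (Fin n) ℂ) :
    MvPolynomial.aeval (fun j : Fin n => (X (Sum.inl j) : DPRing n)) p -
      MvPolynomial.aeval (fun j : Fin n => (X (Sum.inr j) : DPRing n)) p ∈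
        diagIdeal n := by
  induction p using MvPolynomial.induction_on with
  | C a => rw [MvPolynomial.aeval_C, MvPolynomial.aeval_C, sub_self]; exact zero_mem _
  | add p q hp hq =>
    rw [map_add, map_add, show ∀ a b c d : DPRing n, a + b - (c + d)
      = (a - c) + (b - d) from fun _ _ _ _ => by ring]
    exact add_mem hp hq
  | mul_X p j hp =>
    rw [map_mul, map_mul, MvPolynomial.aeval_X, MvPolynomial.aeval_X]
    set a := MvPolynomial.aeval (fun j : Fin n => (X (Sum.inl j) : DPRing n)) p
    set b := MvPolynomial.aeval (fun j : Fin n => (X (Sum.inr j) : DPRing n)) p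
    rw [show a * X (Sum.inl j) - b * X (Sum.inr j)
      = a * (X (Sum.inl j) - X (Sum.inr j)) + (a - b) * X (Sum.inr j) by ring]
    refine add_mem (Ideal.mul_mem_left _ _ (Ideal.subset_span ⟨j, rfl⟩))
      (Ideal.mul_mem_right _ _ hp)

lemma IDelta_le_diag (F : Fin (2 * n) → MvPolynomial (Fin n) ℂ) :
    IDelta n F ≤ diagIdeal n := by
  rw [IDelta, Ideal.span_le]
  rintro _ ⟨i, rfl⟩
  exact aeval_sub_mem (F i)


lemma edeg_sub_single {e : E n} {s : Fin n ⊕ Fin n} (h : 1 ≤ e s) :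
    edeg (e - Finsupp.single s 1) + 1 = edeg e := by
  conv_rhs => rw [← sub_single_add h]
  rw [edeg_add, edeg_single]

lemma diag_gen_mem_max (j : Fin n) :
    (X (Sum.inl j) - X (Sum.inr j) : DPRing n) ∈ maxIdeal n :=
  sub_mem (X_mem_maxIdeal _) (X_mem_maxIdeal _)

lemma diag_le_max : diagIdeal n ≤ maxIdeal n := by
  rw [diagIdeal, Ideal.span_le]
  rintro _ ⟨j, rfl⟩
  exact diag_gen_mem_max j

lemma diag_inf_pow (k : ℕ) :
    diagIdeal n ⊓ maxIdeal n ^ (k + 1) ≤ maxIdeal n ^ k * diagIdeal n := by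
  rintro g ⟨hgD, hgm⟩
  rw [diagIdeal] at hgD
  obtain ⟨c, hc⟩ := Ideal.mem_span_range_iff_exists_fun.mp hgD
  classical
  set p : Fin n → DPRing n := fun j d => if edeg d < k then c j d else 0 with hp
  set q : Fin n → DPRing n := fun j => c j - p j with hq
  have hqm : ∀ j, q j ∈ maxIdeal n ^ k := by
    intro j
    apply low_vanish_mem_pow
    intro e he
    show c j e - p j e = 0
    have : p j e = c j e := by
      simp only [hp]
      rw [if_pos he]
    rw [this, sub_self]
  set r : DPRing n := g - ∑ j, q j * (X (Sum.inl j) - X (Sum.inr j)) with hr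
  have hrm : r ∈ maxIdeal n ^ (k + 1) := by
    refine Submodule.sub_mem _ hgm (Ideal.sum_mem _ fun j _ => ?_)
    rw [pow_succ]
    exact Ideal.mul_mem_mul (hqm j) (diag_gen_mem_max j)
  have hrp : r = ∑ j, p j * (X (Sum.inl j) - X (Sum.inr j)) := by
    rw [hr, ← hc, ← Finset.sum_sub_distrib]
    refine Finset.sum_congr rfl fun j _ => ?_
    simp only [hq]
    ring
  have hhigh : ∀ e : E n, k + 1 ≤ edeg e → r e = 0 := by
    intro e he
    suffices h : coeff e r = 0 from h
    rw [hrp, map_sum]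
    refine Finset.sum_eq_zero fun j _ => ?_
    rw [mul_sub, map_sub, coeff_mul_X, coeff_mul_X]
    have hv : ∀ s : Fin n ⊕ Fin n, 1 ≤ e s → p j (e - Finsupp.single s 1) = 0 := by
      intro s hs
      have hd := edeg_sub_single hs
      simp only [hp]
      rw [if_neg (by omega)]
    have t1 : (if 1 ≤ e (Sum.inl j) then p j (e - Finsupp.single (Sum.inl j) 1)
        else 0) = 0 := by
      split
      · exact hv _ ‹_›
      · rfl
    have t2 : (if 1 ≤ e (Sum.inr j) then p j (e - Finsupp.single (Sum.inr j) 1)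
        else 0) = 0 := by
      split
      · exact hv _ ‹_›
      · rfl
    rw [t1, t2, sub_zero]
  have hlow := pow_le_low_vanish (k + 1) r hrm
  have hr0 : r = 0 := by
    ext e
    rw [coeff_zero]
    by_cases h : edeg e < k + 1
    · exact hlow e h
    · exact hhigh e (by omega)
  have hg : g = ∑ j, q j * (X (Sum.inl j) - X (Sum.inr j)) := by
    have h2 : g - ∑ j, q j * (X (Sum.inl j) - X (Sum.inr j)) = 0 := by
      rw [← hr]; exact hr0
    exact sub_eq_zero.mp h2
  rw [hg]
  exact Ideal.sum_mem _ fun j _ =>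
    Ideal.mul_mem_mul (hqm j) (Ideal.subset_span ⟨j, rfl⟩)

end DP

open DP in
/-- Nakayama-type stabilization: if `M` is an ideal of a `ℂ`-algebra `A` that is
finite-dimensional over `ℂ`, and `m ≤ jacobson ⊥` is f.g., then `m ^ k * M = ⊥`
for some `k`. -/
lemma exists_pow_mul_eq_bot {A : Type*} [CommRing A] [Algebra ℂ A]
    (m M : Ideal A) (hjac : m ≤ Ideal.jacobson (⊥ : Ideal A)) (hmfg : m.FG)
    (hfin : FiniteDimensional ℂ ↥M) :
    ∃ k : ℕ, m ^ k * M = ⊥ := by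
  have hMfg : M.FG := by
    have h1 : Module.Finite ℂ ↥M := hfin
    have h2 : Module.Finite A ↥M := Module.Finite.of_restrictScalars_finite ℂ A ↥M
    exact Module.Finite.iff_fg.mp h2
  set Mr : Submodule ℂ A := M.restrictScalars ℂ with hMr
  haveI : FiniteDimensional ℂ ↥Mr := hfin
  haveI : IsArtinian ℂ ↥Mr := inferInstance
  have hle : ∀ k : ℕ, ((m ^ k * M).restrictScalars ℂ) ≤ Mr := by
    intro k x hx
    exact (Ideal.mul_le_right : m ^ k * M ≤ M) hx
  have hmono : ∀ {k l : ℕ}, k ≤ l → m ^ l * M ≤ m ^ k * M := by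
    intro k l hkl
    exact Ideal.mul_mono_left (Ideal.pow_le_pow_right hkl)
  let c : ℕ →o (Submodule ℂ ↥Mr)ᵒᵈ :=
    ⟨fun k => Submodule.comap Mr.subtype ((m ^ k * M).restrictScalars ℂ),
     fun k l hkl => Submodule.comap_mono (fun x hx => hmono hkl hx)⟩
  obtain ⟨k, hk⟩ := IsArtinian.monotone_stabilizes c
  have hck : c k = c (k + 1) := hk (k + 1) (Nat.le_succ k)
  have heqr : (m ^ k * M).restrictScalars ℂ = (m ^ (k + 1) * M).restrictScalars ℂ := by
    have h1 : Submodule.map Mr.subtype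
        (Submodule.comap Mr.subtype ((m ^ k * M).restrictScalars ℂ)) =
        Submodule.map Mr.subtype
        (Submodule.comap Mr.subtype ((m ^ (k + 1) * M).restrictScalars ℂ)) :=
      congrArg (Submodule.map Mr.subtype) hck
    rwa [Submodule.map_comap_subtype, Submodule.map_comap_subtype,
      inf_eq_right.mpr (hle k), inf_eq_right.mpr (hle (k + 1))] at h1
  have heq : m ^ k * M = m ^ (k + 1) * M :=
    Submodule.restrictScalars_injective ℂ _ _ heqr
  refine ⟨k, ?_⟩
  have hsmul : m ^ k * M ≤ m • (m ^ k * M) := by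
    rw [Ideal.smul_eq_mul, ← mul_assoc, ← pow_succ']
    exact le_of_eq heq
  exact Submodule.eq_bot_of_le_smul_of_le_jacobson_bot m _
    (Submodule.FG.mul (Submodule.FG.pow hmfg k) hMfg) hsmul hjac


set_option maxHeartbeats 1000000 in
theorem primary_decomposition_of_IDelta (n : ℕ)
    (F : Fin (2 * n) → MvPolynomial (Fin n) ℂ)
    (hF0 : ∀ i, MvPolynomial.eval (0 : Fin n → ℂ) (F i) = 0)
    (hfin : FiniteDimensional ℂ
      ↥((diagIdeal n).map (Ideal.Quotient.mk (IDelta n F))))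
    (hpos : 0 < Module.finrank ℂ
      ↥((diagIdeal n).map (Ideal.Quotient.mk (IDelta n F)))) :
    (IDelta n F).radical = diagIdeal n ∧
    ∃ Q : Ideal (DPRing n), Q.IsPrimary ∧ Q.radical = maxIdeal n ∧
      IDelta n F = diagIdeal n ⊓ Q := by
  classical
  obtain ⟨k, hk⟩ : ∃ k, maxIdeal n ^ k * diagIdeal n ≤ IDelta n F := by
    have hjac : (maxIdeal n).map (Ideal.Quotient.mk (IDelta n F)) ≤
        Ideal.jacobson (⊥ : Ideal (DPRing n ⧸ IDelta n F)) := by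
      rw [Ideal.map_le_iff_le_comap]
      intro r hr
      rw [Ideal.mem_comap, Ideal.mem_jacobson_bot]
      intro y
      obtain ⟨y', rfl⟩ := Ideal.Quotient.mk_surjective y
      rw [← map_mul, ← map_one (Ideal.Quotient.mk (IDelta n F)), ← map_add]
      apply IsUnit.map
      rw [MvPowerSeries.isUnit_iff_constantCoeff]
      have h0 : constantCoeff r = 0 := DP.maxIdeal_le_ker hr
      rw [map_add, map_mul, h0, zero_mul, zero_add, map_one]
      exact isUnit_one
    have hmax_fg : (maxIdeal n).FG := Submodule.fg_span (Set.finite_range _)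
    have hmfg : ((maxIdeal n).map (Ideal.Quotient.mk (IDelta n F))).FG :=
      Ideal.FG.map hmax_fg _
    obtain ⟨k, hk⟩ := exists_pow_mul_eq_bot
      ((maxIdeal n).map (Ideal.Quotient.mk (IDelta n F)))
      ((diagIdeal n).map (Ideal.Quotient.mk (IDelta n F))) hjac hmfg hfin
    refine ⟨k, ?_⟩
    have hmap : ((maxIdeal n ^ k * diagIdeal n).map
        (Ideal.Quotient.mk (IDelta n F))) = ⊥ := by
      rw [Ideal.map_mul, Ideal.map_pow, hk]
    rw [Ideal.map_eq_bot_iff_le_ker, Ideal.mk_ker] at hmap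
    exact hmap
  set Q : Ideal (DPRing n) := IDelta n F ⊔ maxIdeal n ^ (k + 1) with hQdef
  have hID : IDelta n F ≤ diagIdeal n := DP.IDelta_le_diag F
  have hQm : Q ≤ maxIdeal n :=
    sup_le (le_trans hID DP.diag_le_max) (Ideal.pow_le_self (Nat.succ_ne_zero k))
  have hinter : IDelta n F = diagIdeal n ⊓ Q := by
    apply le_antisymm
    · exact le_inf hID le_sup_left
    · rintro x ⟨hxD, hxQ⟩
      obtain ⟨i, hi, h, hh, rfl⟩ := Submodule.mem_sup.mp hxQ
      have hhD : h ∈ diagIdeal n := by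
        have he : h = (i + h) - i := by ring
        rw [he]
        exact Submodule.sub_mem _ hxD (hID hi)
      have hmem : h ∈ maxIdeal n ^ k * diagIdeal n := DP.diag_inf_pow k ⟨hhD, hh⟩
      exact Ideal.add_mem _ hi (hk hmem)
  have hradQ : Q.radical = maxIdeal n := by
    apply le_antisymm
    · calc Q.radical ≤ (maxIdeal n).radical := Ideal.radical_mono hQm
        _ = maxIdeal n := DP.maxIdeal_isMaximal.isPrime.radical
    · have h1 : (maxIdeal n ^ (k + 1)).radical = (maxIdeal n).radical :=
        Ideal.radical_pow (maxIdeal n) (Nat.succ_ne_zero k)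
      calc maxIdeal n = (maxIdeal n).radical :=
            (DP.maxIdeal_isMaximal.isPrime.radical).symm
        _ = (maxIdeal n ^ (k + 1)).radical := h1.symm
        _ ≤ Q.radical := Ideal.radical_mono le_sup_right
  refine ⟨?_, Q, ?_, hradQ, hinter⟩
  · rw [hinter, Ideal.radical_inf, DP.diagIdeal_isPrime.radical, hradQ]
    exact inf_eq_left.mpr DP.diag_le_max
  · exact Ideal.isPrimary_of_isMaximal_radical
      (by rw [hradQ]; exact DP.maxIdeal_isMaximal)

end
end

section
/- Let (R, m) be a Noetherian local ring, let P be a prime ideal of R with P ≠ m, and let I ⊆ P be an ideal with I ≠ P such that the R-module P/I has finite length. Then there exists an m-primary ideal Q of R (an ideal Q that is primary with radical equal to m) such that I = P ∩ Q. -/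
open IsLocalRing


/- STATEMENT 3: Let `(R, m)` be a Noetherian local ring, `P ≠ m` a prime ideal,
and `I ⊆ P` an ideal with `I ≠ P` such that `P/I` has finite length as an
`R`-module. Then `I = P ∩ Q` for some `m`-primary ideal `Q`. -/

theorem exists_primary_component {R : Type*} [CommRing R] [IsNoetherianRing R]
    [IsLocalRing R] (P I : Ideal R) (hP : P.IsPrime)
    (hPm : P ≠ IsLocalRing.maximalIdeal R) (hIP : I ≤ P) (hIneP : I ≠ P)
    (hlen : IsFiniteLength R ↥(P.map (Ideal.Quotient.mk I))) :
    ∃ Q : Ideal R, Q.IsPrimary ∧ Q.radical = IsLocalRing.maximalIdeal R ∧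
      I = P ⊓ Q := by
  set m := maximalIdeal R with hm
  -- Step 1: some power of m multiplies P into I
  have step1 : ∃ N : ℕ, ∀ a ∈ m ^ N, ∀ p ∈ P, a * p ∈ I := by
    set M := ↥(P.map (Ideal.Quotient.mk I))
    obtain ⟨hNoe, hArt⟩ := isFiniteLength_iff_isNoetherian_isArtinian.mp hlen
    have := IsArtinian.monotone_stabilizes (R := R) (M := M)
      ⟨fun n => OrderDual.toDual (m ^ n • ⊤ : Submodule R M), fun a b hab => by
        dsimp
        exact Submodule.smul_mono (Ideal.pow_le_pow_right hab) le_rfl⟩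
    obtain ⟨n, hn⟩ := this
    have hbot : (m ^ n • ⊤ : Submodule R M) = ⊥ := by
      have h1 : (m ^ n • ⊤ : Submodule R M) = m ^ (n+1) • ⊤ := hn (n+1) (Nat.le_succ n)
      refine Submodule.eq_bot_of_le_smul_of_le_jacobson_bot m _
        (IsNoetherian.noetherian _) ?_ ?_
      · conv_lhs => rw [h1]
        rw [pow_succ', ← smul_eq_mul, Submodule.smul_assoc]
      · rw [jacobson_eq_maximalIdeal ⊥ bot_ne_top]
    refine ⟨n, fun a ha p hp => ?_⟩
    have hmem : (⟨Ideal.Quotient.mk I p, Ideal.mem_map_of_mem _ hp⟩ : M) ∈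
        (⊤ : Submodule R M) := trivial
    have : a • (⟨Ideal.Quotient.mk I p, Ideal.mem_map_of_mem _ hp⟩ : M) ∈
        (m ^ n • ⊤ : Submodule R M) := Submodule.smul_mem_smul ha hmem
    rw [hbot, Submodule.mem_bot] at this
    have : a • (Ideal.Quotient.mk I p) = 0 := congrArg Subtype.val this
    rwa [Algebra.smul_def, Ideal.Quotient.algebraMap_eq, ← map_mul,
      Ideal.Quotient.eq_zero_iff_mem] at this
  obtain ⟨N, hN⟩ := step1
  -- Step 2: Artin–Rees
  obtain ⟨k, hk⟩ := Ideal.exists_pow_inf_eq_pow_smul m (P : Submodule R R)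
  set n := N + k + 1 with hn
  have hAR : m ^ n ⊓ P ≤ I := by
    have h := hk n (by omega)
    have hnk : n - k = N + 1 := by omega
    have htop : (m ^ n • ⊤ : Submodule R R) = m ^ n := by
      rw [smul_eq_mul, Ideal.mul_top]
    rw [htop, hnk] at h
    intro x hx
    have hx' : x ∈ m ^ (N + 1) • ((m ^ k • ⊤ : Submodule R R) ⊓ P) := h ▸ hx
    have hle : m ^ (N + 1) • ((m ^ k • ⊤ : Submodule R R) ⊓ P) ≤ I := by
      refine Submodule.smul_le.mpr fun a ha p hp => ?_
      have ha' : a ∈ m ^ N := Ideal.pow_le_pow_right (Nat.le_succ N) ha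
      exact hN a ha' p hp.2
    exact hle hx'
  have hrad : Ideal.radical (I ⊔ m ^ n) = m := by
    apply le_antisymm
    · have hQm : I ⊔ m ^ n ≤ m := by
        refine sup_le (hIP.trans (le_maximalIdeal hP.ne_top)) ?_
        exact Ideal.pow_le_self (by omega)
      calc Ideal.radical (I ⊔ m ^ n) ≤ Ideal.radical m := Ideal.radical_mono hQm
        _ = m := (maximalIdeal.isMaximal R).isPrime.radical
    · intro x hx
      refine ⟨n, ?_⟩
      exact (le_sup_right : m ^ n ≤ I ⊔ m ^ n) (Ideal.pow_mem_pow hx n)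
  refine ⟨I ⊔ m ^ n, ?_, hrad, ?_⟩
  · apply Ideal.isPrimary_of_isMaximal_radical
    rw [hrad]
    exact maximalIdeal.isMaximal R
  ·
    apply le_antisymm
    · exact le_inf hIP le_sup_left
    · rintro x ⟨hxP, hxQ⟩
      obtain ⟨i, hi, y, hy, rfl⟩ := Submodule.mem_sup.mp hxQ
      have hyP : y ∈ P := by
        have : (i + y) - i ∈ P := P.sub_mem hxP (hIP hi)
        simpa using this
      exact I.add_mem hi (hAR ⟨hy, hyP⟩)
end

section
/- Let f : ℂⁿ → ℂ^{2n} be a polynomial map with f(0)=0 and suppose Q is an ideal of R = ℂ⟦x₁,…,xₙ,x₁',…,xₙ'⟧, primary with radical equal to the maximal ideal of R, such that I_Δ = D ∩ Q. Then dim_ℂ(R/Q) and dim_ℂ(R/(D+Q)) are finite and dim_ℂ(D/I_Δ) = dim_ℂ(R/Q) − dim_ℂ(R/(D+Q)). (Since dim_ℂ(D/I_Δ) = 2·d(f) for A-finite f, this gives d(f) = ½·(dim_ℂ R/Q − dim_ℂ R/(D+Q)).) -/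
/- STATEMENT 6: If `f : ℂⁿ → ℂ^{2n}` is polynomial with `f 0 = 0` and
`I_Δ = D ∩ Q` with `Q` primary with radical the maximal ideal of
`R = ℂ⟦x,x'⟧`, then `dim_ℂ (R/Q)` and `dim_ℂ (R/(D+Q))` are finite and
`dim_ℂ (D/I_Δ) = dim_ℂ (R/Q) − dim_ℂ (R/(D+Q))`. -/

set_option synthInstance.maxHeartbeats 1000000
set_option maxHeartbeats 1000000

noncomputable section

open MvPowerSeries

lemma mem_pow_maxIdeal (n : ℕ) (k : ℕ) (g : DPRing n)
    (h : ∀ d : (Fin n ⊕ Fin n) →₀ ℕ, (∑ j, d j) < k → MvPowerSeries.coeff d g = 0) :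
    g ∈ (maxIdeal n) ^ k := by
  induction k generalizing g with
  | zero => simp
  | succ k ih =>
    classical
    by_cases hn : Nonempty (Fin n ⊕ Fin n)
    · let sel : ((Fin n ⊕ Fin n) →₀ ℕ) → (Fin n ⊕ Fin n) :=
        fun e => Classical.epsilon (fun i => e i ≠ 0)
      have hsel : ∀ e : (Fin n ⊕ Fin n) →₀ ℕ, e ≠ 0 → e (sel e) ≠ 0 := by
        intro e he
        obtain ⟨a, ha⟩ := Finsupp.ne_iff.mp he
        exact Classical.epsilon_spec (p := fun i => e i ≠ 0) ⟨a, by simpa using ha⟩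
      set G : (Fin n ⊕ Fin n) → DPRing n :=
        fun i d => if sel (d + Finsupp.single i 1) = i
          then MvPowerSeries.coeff (d + Finsupp.single i 1) g else 0 with hGdef
      have hGcoeff : ∀ i d, MvPowerSeries.coeff d (G i)
          = if sel (d + Finsupp.single i 1) = i
            then MvPowerSeries.coeff (d + Finsupp.single i 1) g else 0 := fun i d => rfl
      have hdecomp : g = ∑ i, MvPowerSeries.X i * G i := by
        ext e
        rw [map_sum]
        by_cases he : e = 0
        · subst he
          rw [h 0 (by simp)]
          symm
          refine Finset.sum_eq_zero fun i _ => ?_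
          rw [MvPowerSeries.X_def, MvPowerSeries.coeff_monomial_mul, if_neg]
          intro hle
          simpa using hle i
        · have hje := hsel e he
          have hterm : ∀ i, MvPowerSeries.coeff e (MvPowerSeries.X i * G i)
              = if i = sel e then MvPowerSeries.coeff e g else 0 := by
            intro i
            rw [MvPowerSeries.X_def, MvPowerSeries.coeff_monomial_mul]
            by_cases hle : Finsupp.single i 1 ≤ e
            · rw [if_pos hle, one_mul, hGcoeff, tsub_add_cancel_of_le hle]
              by_cases hij : i = sel e
              · rw [if_pos hij.symm, if_pos hij]
              · rw [if_neg (fun hh => hij hh.symm), if_neg hij]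
            · rw [if_neg hle, if_neg]
              intro hij
              exact hle (by
                subst hij
                exact Finsupp.single_le_iff.mpr (Nat.one_le_iff_ne_zero.mpr hje))
          rw [Finset.sum_congr rfl fun i _ => hterm i]
          simp
      have hGmem : ∀ i, G i ∈ (maxIdeal n) ^ k := by
        intro i
        apply ih
        intro d hd
        rw [hGcoeff]
        have hdeg : (∑ j, ((d + Finsupp.single i 1) : (Fin n ⊕ Fin n) →₀ ℕ) j) = (∑ j, d j) + 1 := by
          simp [Finsupp.add_apply, Finset.sum_add_distrib, Finsupp.single_apply,
            Finset.sum_ite_eq]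
        split_ifs
        · exact h _ (by omega)
        · rfl
      rw [hdecomp]
      refine Ideal.sum_mem _ fun i _ => ?_
      rw [pow_succ']
      exact Ideal.mul_mem_mul (Ideal.subset_span ⟨i, rfl⟩) (hGmem i)
    · have hg : g = 0 := by
        ext e
        have he : e = 0 := by
          ext a
          exact absurd ⟨a⟩ hn
        rw [he, h 0 (by simp), map_zero]
      simp [hg]


lemma finiteDimensional_quot (n k : ℕ) (J : Ideal (DPRing n))
    (hJ : (maxIdeal n) ^ k ≤ J) : FiniteDimensional ℂ (DPRing n ⧸ J) := by
  classical
  have hfin : Finite {d : (Fin n ⊕ Fin n) →₀ ℕ // (∑ j, d j) < k} := by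
    refine Finite.of_injective (fun d => (fun j =>
      (⟨d.1 j, lt_of_le_of_lt
        (Finset.single_le_sum (fun a _ => Nat.zero_le (d.1 a)) (Finset.mem_univ j)) d.2⟩ :
        Fin k)) : _ → ((Fin n ⊕ Fin n) → Fin k)) ?_
    intro a b hab
    refine Subtype.ext (Finsupp.ext fun j => ?_)
    exact congrArg Fin.val (congrFun hab j)
  haveI := Fintype.ofFinite {d : (Fin n ⊕ Fin n) →₀ ℕ // (∑ j, d j) < k}
  set Φ : DPRing n →ₗ[ℂ] ({d : (Fin n ⊕ Fin n) →₀ ℕ // (∑ j, d j) < k} → ℂ) :=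
    LinearMap.pi (fun d => MvPowerSeries.coeff d.1) with hΦ
  have hker : LinearMap.ker Φ ≤ LinearMap.ker (Ideal.Quotient.mkₐ ℂ J).toLinearMap := by
    intro g hg
    have hcoeff : ∀ d : (Fin n ⊕ Fin n) →₀ ℕ, (∑ j, d j) < k →
        MvPowerSeries.coeff d g = 0 := by
      intro d hd
      exact congrFun (LinearMap.mem_ker.mp hg) ⟨d, hd⟩
    have : g ∈ J := hJ (mem_pow_maxIdeal n k g hcoeff)
    simpa [LinearMap.mem_ker, Ideal.Quotient.eq_zero_iff_mem] using this
  set ψ := (LinearMap.ker Φ).liftQ (Ideal.Quotient.mkₐ ℂ J).toLinearMap hker with hψ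
  have hsurj : Function.Surjective ψ := by
    intro x
    obtain ⟨y, rfl⟩ := Ideal.Quotient.mk_surjective x
    exact ⟨Submodule.Quotient.mk y, by simp [hψ]⟩
  haveI : FiniteDimensional ℂ (DPRing n ⧸ LinearMap.ker Φ) :=
    LinearEquiv.finiteDimensional (LinearMap.quotKerEquivRange Φ).symm
  exact Module.Finite.of_surjective ψ hsurj


theorem artin_nagata_from_primary_component (n : ℕ)
    (F : Fin (2 * n) → MvPolynomial (Fin n) ℂ)
    (hF0 : ∀ i, MvPolynomial.eval (0 : Fin n → ℂ) (F i) = 0)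
    (Q : Ideal (DPRing n)) (hQ : Q.IsPrimary) (hQrad : Q.radical = maxIdeal n)
    (hdec : IDelta n F = diagIdeal n ⊓ Q) :
    FiniteDimensional ℂ (DPRing n ⧸ Q) ∧
    FiniteDimensional ℂ (DPRing n ⧸ (diagIdeal n ⊔ Q)) ∧
    FiniteDimensional ℂ
      ↥((diagIdeal n).map (Ideal.Quotient.mk (IDelta n F))) ∧
    (Module.finrank ℂ
        ↥((diagIdeal n).map (Ideal.Quotient.mk (IDelta n F))) : ℤ) =
      (Module.finrank ℂ (DPRing n ⧸ Q) : ℤ) -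
        (Module.finrank ℂ (DPRing n ⧸ (diagIdeal n ⊔ Q)) : ℤ) := by
  classical
  -- a power of the maximal ideal is contained in Q
  obtain ⟨k, hk⟩ : ∃ k, (maxIdeal n) ^ k ≤ Q := by
    obtain ⟨k, hk⟩ := Ideal.exists_radical_pow_le_of_fg Q (by
      rw [hQrad]
      exact Submodule.fg_span (Set.finite_range _))
    exact ⟨k, by rwa [hQrad] at hk⟩
  haveI h1 : FiniteDimensional ℂ (DPRing n ⧸ Q) := finiteDimensional_quot n k Q hk
  haveI h2 : FiniteDimensional ℂ (DPRing n ⧸ (diagIdeal n ⊔ Q)) :=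
    finiteDimensional_quot n k _ (hk.trans le_sup_right)
  have hIQ : IDelta n F ≤ Q := hdec.le.trans inf_le_right
  have hID : IDelta n F ≤ diagIdeal n := hdec.le.trans inf_le_left
  set I := IDelta n F with hI
  set D := diagIdeal n with hD
  set S : Ideal (DPRing n ⧸ I) := D.map (Ideal.Quotient.mk I) with hS
  set T : Ideal (DPRing n ⧸ Q) := D.map (Ideal.Quotient.mk Q) with hT
  -- the factor algebra hom
  set G : (DPRing n ⧸ I) →ₐ[ℂ] (DPRing n ⧸ Q) :=
    Ideal.quotientMapₐ Q (AlgHom.id ℂ _) (by simpa using hIQ) with hG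
  have hGmk : ∀ r : DPRing n, G (Ideal.Quotient.mk I r) = Ideal.Quotient.mk Q r := by
    intro r; simp [hG]
  -- the C-linear map from S to R/Q
  set L : ↥S →ₗ[ℂ] (DPRing n ⧸ Q) :=
    G.toLinearMap.comp ((S.subtype).restrictScalars ℂ) with hL
  have hLapp : ∀ x : ↥S, L x = G x.1 := fun x => rfl
  have hLinj : Function.Injective L := by
    rw [injective_iff_map_eq_zero]
    intro x hx
    obtain ⟨r, hrD, hrx⟩ := Ideal.mem_map_iff_of_surjective _
      Ideal.Quotient.mk_surjective |>.mp x.2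
    have : G x.1 = 0 := hx
    rw [← hrx, hGmk] at this
    have hrQ : r ∈ Q := Ideal.Quotient.eq_zero_iff_mem.mp this
    have hrI : r ∈ I := by
      rw [hdec]
      exact ⟨hrD, hrQ⟩
    exact Subtype.ext (by rw [← hrx]; exact Ideal.Quotient.eq_zero_iff_mem.mpr hrI)
  have hLrange : LinearMap.range L = T.restrictScalars ℂ := by
    ext y
    constructor
    · rintro ⟨x, rfl⟩
      obtain ⟨r, hrD, hrx⟩ := Ideal.mem_map_iff_of_surjective _
        Ideal.Quotient.mk_surjective |>.mp x.2
      rw [hLapp, ← hrx, hGmk]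
      exact Ideal.mem_map_of_mem _ hrD
    · intro hy
      obtain ⟨r, hrD, hrx⟩ := Ideal.mem_map_iff_of_surjective _
        Ideal.Quotient.mk_surjective |>.mp hy
      exact ⟨⟨Ideal.Quotient.mk I r, Ideal.mem_map_of_mem _ hrD⟩, by rw [hLapp, hGmk, hrx]⟩
  set e1 : ↥S ≃ₗ[ℂ] ↥(T.restrictScalars ℂ) :=
    (LinearEquiv.ofInjective L hLinj).trans (LinearEquiv.ofEq _ _ hLrange) with he1
  haveI h3 : FiniteDimensional ℂ ↥S := LinearEquiv.finiteDimensional e1.symm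
  -- rank-nullity
  have hrn := Submodule.finrank_quotient_add_finrank (T.restrictScalars ℂ)
  -- identify the quotient with R/(D ⊔ Q)
  have hq : Module.finrank ℂ ((DPRing n ⧸ Q) ⧸ (T.restrictScalars ℂ)) =
      Module.finrank ℂ (DPRing n ⧸ (D ⊔ Q)) := by
    have e2 : ((DPRing n ⧸ Q) ⧸ (T.restrictScalars ℂ)) ≃ₗ[ℂ]
        ((DPRing n ⧸ Q) ⧸ T) := Submodule.Quotient.restrictScalarsEquiv ℂ T
    have e3 : ((DPRing n ⧸ Q) ⧸ T) ≃ₗ[ℂ] (DPRing n ⧸ (Q ⊔ D)) := by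
      have hmap : D.map (Ideal.Quotient.mkₐ ℂ Q) = T := rfl
      have := (DoubleQuot.quotQuotEquivQuotSupₐ ℂ Q D).toLinearEquiv
      rwa [hmap] at this
    have e4 : (DPRing n ⧸ (Q ⊔ D)) ≃ₗ[ℂ] (DPRing n ⧸ (D ⊔ Q)) :=
      (Ideal.quotientEquivAlgOfEq ℂ (sup_comm Q D)).toLinearEquiv
    rw [e2.finrank_eq, e3.finrank_eq, e4.finrank_eq]
  have hst : Module.finrank ℂ ↥S = Module.finrank ℂ ↥(T.restrictScalars ℂ) := e1.finrank_eq
  refine ⟨h1, h2, h3, ?_⟩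
  rw [hst]
  rw [hq] at hrn
  omega

end
end
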